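/- For natural numbers r and m with r ≤ m − 1, the dual code of RM(r,m) with respect to the bilinear form ⟨u,v⟩ = ∑_{x ∈ (ZMod 2)^m} u(x)·v(x) equals RM(m−r−1, m); that is, a function v : (ZMod 2)^m → ZMod 2 satisfies ⟨u,v⟩ = 0 for all u ∈ RM(r,m) if and only if v ∈ RM(m−r−1,m). -/

import Mathlib

open MvPolynomial

/-- The Reed–Muller code `RM(r, m)`: the `𝔽₂`-linear subspace of functions
`(ZMod 2)^m → ZMod 2` consisting of evaluation vectors of `m`-variate polynomials over
`ZMod 2` of total degree at most `r`. -/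
def RM (r m : ℕ) : Submodule (ZMod 2) ((Fin m → ZMod 2) → ZMod 2) where
  carrier := {f | ∃ p : MvPolynomial (Fin m) (ZMod 2),
    p.totalDegree ≤ r ∧ ∀ x, f x = eval x p}
  zero_mem' := ⟨0, by simp, by simp⟩
  add_mem' := by
    rintro f g ⟨p, hp, hf⟩ ⟨q, hq, hg⟩
    exact ⟨p + q, le_trans (totalDegree_add p q) (max_le hp hq),
      fun x => by simp [hf x, hg x]⟩
  smul_mem' := by
    rintro c f ⟨p, hp, hf⟩
    refine ⟨c • p, le_trans (totalDegree_smul_le c p) hp, fun x => by simp [hf x]⟩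

lemma sum_pow_zmod2 (a : ℕ) : ∑ b : ZMod 2, b ^ a = if a = 0 then 0 else 1 := by
  have huniv : (Finset.univ : Finset (ZMod 2)) = {0, 1} := by decide
  rw [huniv, Finset.sum_insert (by decide), Finset.sum_singleton, one_pow]
  rcases Nat.eq_zero_or_pos a with h | h
  · subst h; decide
  · rw [zero_pow h.ne', if_neg h.ne', zero_add]

lemma sum_prod_pow {m : ℕ} (f : Fin m → ℕ) :
    ∑ x : Fin m → ZMod 2, ∏ i, (x i) ^ (f i) = if ∀ i, f i ≠ 0 then 1 else 0 := by
  rw [show (Finset.univ : Finset (Fin m → ZMod 2))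
      = Fintype.piFinset (fun _ => Finset.univ) from (Fintype.piFinset_univ).symm,
    ← Finset.prod_univ_sum (fun _ => (Finset.univ : Finset (ZMod 2))) (fun i b => b ^ f i)]
  by_cases h : ∀ i, f i ≠ 0
  · rw [if_pos h]
    exact Finset.prod_eq_one fun i _ => by rw [sum_pow_zmod2, if_neg (h i)]
  · rw [if_neg h]
    push_neg at h
    obtain ⟨i, hi⟩ := h
    exact Finset.prod_eq_zero (Finset.mem_univ i) (by rw [sum_pow_zmod2, if_pos hi])

lemma sum_eval {m : ℕ} (p : MvPolynomial (Fin m) (ZMod 2)) :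
    ∑ x : Fin m → ZMod 2, eval x p
      = ∑ d ∈ p.support, if ∀ i, d i ≠ 0 then coeff d p else 0 := by
  simp_rw [eval_eq']
  rw [Finset.sum_comm]
  refine Finset.sum_congr rfl fun d _ => ?_
  rw [← Finset.mul_sum, sum_prod_pow, mul_ite, mul_one, mul_zero]

lemma sum_eval_eq_zero {m : ℕ} {p : MvPolynomial (Fin m) (ZMod 2)}
    (hp : p.totalDegree < m) : ∑ x : Fin m → ZMod 2, eval x p = 0 := by
  rw [sum_eval]
  refine Finset.sum_eq_zero fun d hd => ?_
  rw [if_neg]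
  intro hall
  have h1 : m ≤ ∑ i : Fin m, d i := by
    calc m = ∑ _i : Fin m, 1 := by simp
    _ ≤ ∑ i, d i := Finset.sum_le_sum fun i _ => Nat.one_le_iff_ne_zero.2 (hall i)
  have h2 : (d.sum fun _ e => e) ≤ p.totalDegree := le_totalDegree hd
  rw [Finsupp.sum_fintype _ _ (fun _ => rfl)] at h2
  omega

/-- The multilinear representative of a boolean function. -/
noncomputable def mrep {m : ℕ} (v : (Fin m → ZMod 2) → ZMod 2) :
    MvPolynomial (Fin m) (ZMod 2) :=
  ∑ y : Fin m → ZMod 2, C (v y) * ∏ i, (X i + C (1 + y i))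

lemma eval_mrep {m : ℕ} (v : (Fin m → ZMod 2) → ZMod 2) (x : Fin m → ZMod 2) :
    eval x (mrep v) = v x := by
  have hab : ∀ a b : ZMod 2, a + (1 + b) = if b = a then 1 else 0 := by decide
  simp only [mrep, map_sum, map_mul, eval_C, map_prod, map_add, eval_X]
  have key : ∀ y : Fin m → ZMod 2, (∏ i, (x i + (1 + y i))) = if y = x then 1 else 0 := by
    intro y
    by_cases hyx : y = x
    · subst hyx
      rw [if_pos rfl]
      exact Finset.prod_eq_one fun i _ => by rw [hab, if_pos rfl]
    · rw [if_neg hyx]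
      obtain ⟨i, hi⟩ : ∃ i, y i ≠ x i := by
        by_contra hc; push_neg at hc; exact hyx (funext hc)
      exact Finset.prod_eq_zero (Finset.mem_univ i) (by rw [hab, if_neg hi])
  simp_rw [key, mul_ite, mul_one, mul_zero]
  simp

lemma mrep_multilinear {m : ℕ} {v : (Fin m → ZMod 2) → 
    ZMod 2} {d : Fin m →₀ ℕ} (hd : d ∈ (mrep v).support) (j : Fin m) : d j ≤ 1 := by
  rw [mem_support_iff] at hd
  have hco : coeff d (mrep v) = ∑ y : Fin m → ZMod 2,
      v y * coeff d (∏ i, (X i + C (1 + y i))) := by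
    simp [mrep, coeff_sum, coeff_C_mul]
  obtain ⟨y, -, hy⟩ : ∃ y ∈ Finset.univ,
      v y * coeff d (∏ i, (X i + (C (1 + y i)) : MvPolynomial (Fin m) (ZMod 2))) ≠ 0 := by
    by_contra hc; push_neg at hc
    exact hd (hco.trans (Finset.sum_eq_zero hc))
  have hmem : d ∈ (∏ i, (X i + (C (1 + y i)) : MvPolynomial (Fin m) (ZMod 2))).support := by
    rw [mem_support_iff]; exact fun h0 => hy (by rw [h0, mul_zero])
  refine le_trans (monomial_le_degreeOf j hmem) (le_trans (degreeOf_prod_le j _ _) ?_)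
  calc ∑ i, degreeOf j (X i + (C (1 + y i) : MvPolynomial (Fin m) (ZMod 2)))
      ≤ ∑ i, (if j = i then 1 else 0) := by
        refine Finset.sum_le_sum fun i _ => ?_
        refine le_trans (degreeOf_add_le _ _ _) ?_
        rw [degreeOf_C, degreeOf_X]
        simp
    _ = 1 := by simp

/-- For `r ≤ m - 1` (i.e. `r + 1 ≤ m`), the dual of `RM(r, m)` with respect to
the bilinear form `⟨u, v⟩ = ∑ x, u x * v x` equals `RM(m - r - 1, m)`: a function `v` is
orthogonal to every codeword of `RM(r, m)` iff `v ∈ RM(m - r - 1, m)`. -/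
theorem stmt_3 (r m : ℕ) (h : r + 1 ≤ m) (v : (Fin m → ZMod 2) → ZMod 2) :
    (∀ u ∈ RM r m, ∑ x : Fin m → ZMod 2, u x * v x = 0) ↔ v ∈ RM (m - r - 1) m := by
  constructor
  · intro H
    by_cases hle : (mrep v).totalDegree ≤ m - r - 1
    · exact ⟨mrep v, hle, fun x => (eval_mrep v x).symm⟩
    exfalso
    push_neg at hle
    have hq0 : mrep v ≠ 0 := by
      intro h0
      rw [h0, totalDegree_zero] at hle
      omega
    obtain ⟨d₀, hd₀, hsup⟩ := Finset.exists_mem_eq_sup (mrep v).support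
      (Finset.nonempty_iff_ne_empty.mpr (mt MvPolynomial.support_eq_empty.mp hq0)) (fun d => d.sum fun _ e => e)
    have hsup' : (mrep v).totalDegree = d₀.sum fun _ e => e := hsup
    set S : Finset (Fin m) := d₀.support with hS
    have hml := fun d hd j => mrep_multilinear (v := v) (d := d) hd j
    have hd₀sum : (d₀.sum fun _ e => e) = S.card := by
      rw [Finsupp.sum, Finset.card_eq_sum_ones]
      exact Finset.sum_congr rfl fun i hi =>
        le_antisymm (hml d₀ hd₀ i) (Nat.one_le_iff_ne_zero.2 (Finsupp.mem_support_iff.1 hi))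
    have hScard : S.card ≤ m := le_trans (Finset.card_le_univ S) (by simp)
    have hk : m - r ≤ S.card := by omega
    -- the test codeword
    set p₀ : MvPolynomial (Fin m) (ZMod 2) := ∏ i ∈ Sᶜ, X i with hp₀
    have htd : p₀.totalDegree ≤ r := by
      refine le_trans (totalDegree_finset_prod _ _) ?_
      have : ∑ i ∈ Sᶜ, (X i : MvPolynomial (Fin m) (ZMod 2)).totalDegree
          = Sᶜ.card := by simp [totalDegree_X]
      rw [this, Finset.card_compl]
      simp only [Fintype.card_fin]
      omega
    have hu : (fun x => eval x p₀) ∈ RM r m := ⟨p₀, htd, fun x => rfl⟩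
    have H0 := H _ hu
    -- compute the pairing
    have heval : ∀ x : Fin m → ZMod 2, eval x p₀ * v x
        = ∑ d ∈ (mrep v).support,
            coeff d (mrep v) * ∏ i, (x i) ^ ((if i ∈ Sᶜ then 1 else 0) + d i) := by
      intro x
      rw [← eval_mrep v x, eval_eq' x (mrep v), Finset.mul_sum]
      refine Finset.sum_congr rfl fun d _ => ?_
      rw [mul_left_comm]
      congr 1
      rw [hp₀, map_prod]
      simp only [eval_X]
      have hpr : (∏ i ∈ Sᶜ, x i) = ∏ i, (if i ∈ Sᶜ then x i else 1) := by
        rw [Finset.prod_ite_mem Finset.univ Sᶜ x, Finset.univ_inter]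
      rw [hpr, ← Finset.prod_mul_distrib]
      refine Finset.prod_congr rfl fun i _ => ?_
      by_cases hi : i ∈ Sᶜ <;> simp [hi, pow_add]
    have Hsum : (∑ x : Fin m → ZMod 2, eval x p₀ * v x)
        = ∑ d ∈ (mrep v).support,
            (if ∀ i ∈ S, d i ≠ 0 then coeff d (mrep v) else 0) := by
      simp_rw [heval]
      rw [Finset.sum_comm]
      refine Finset.sum_congr rfl fun d _ => ?_
      rw [← Finset.mul_sum, sum_prod_pow, mul_ite, mul_one, mul_zero]
      congr 1
      simp only [eq_iff_iff]
      constructor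
      · intro hall i hiS
        have h1 := hall i
        rw [if_neg (by simp [hiS] : i ∉ Sᶜ)] at h1
        omega
      · intro hS' i
        by_cases hi : i ∈ S
        · rw [if_neg (by simp [hi] : i ∉ Sᶜ)]
          have := hS' i hi
          omega
        · rw [if_pos (by simp [hi] : i ∈ Sᶜ)]
          omega
    have Hone : (∑ d ∈ (mrep v).support,
        (if ∀ i ∈ S, d i ≠ 0 then coeff d (mrep v) else 0)) = coeff d₀ (mrep v) := by
      refine Finset.sum_eq_single_of_mem d₀ hd₀ ?_ |>.trans ?_
      · intro d hd hne
        rw [if_neg]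
        intro hall
        apply hne
        have hsub : S ⊆ d.support := fun i hi =>
          Finsupp.mem_support_iff.2 (hall i hi)
        have hdsum : (d.sum fun _ e => e) = d.support.card := by
          rw [Finsupp.sum, Finset.card_eq_sum_ones]
          exact Finset.sum_congr rfl fun i hi =>
            le_antisymm (hml d hd i) (Nat.one_le_iff_ne_zero.2 (Finsupp.mem_support_iff.1 hi))
        have hle2 : (d.sum fun _ e => e) ≤ S.card := by
          rw [← hd₀sum, ← hsup']
          exact le_totalDegree hd
        have hSeq : S = d.support := Finset.eq_of_subset_of_card_le hsub (by omega)
        ext i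
        by_cases hi : i ∈ S
        · have h1 : d i ≠ 0 := hall i hi
          have h2 : d₀ i ≠ 0 := Finsupp.mem_support_iff.1 hi
          have := hml d hd i
          have := hml d₀ hd₀ i
          omega
        · have h1 : d i = 0 := by
            rw [← Finsupp.notMem_support_iff, ← hSeq]; exact hi
          have h2 : d₀ i = 0 := Finsupp.notMem_support_iff.1 hi
          rw [h1, h2]
      · rw [if_pos]
        intro i hi
        exact Finsupp.mem_support_iff.1 hi
    rw [Hsum, Hone] at H0
    exact Finsupp.mem_support_iff.1 hd₀ H0
  · rintro ⟨q, hq, hv⟩ u ⟨p, hp, hu⟩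
    have : ∀ x, u x * v x = eval x (p * q) := fun x => by rw [hu, hv, eval_mul]
    simp_rw [this]
    refine sum_eval_eq_zero ?_
    refine lt_of_le_of_lt (totalDegree_mul p q) ?_
    omega
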